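/- Fix integers n ≥ 3 and N ≥ 1, set ν = (1+n)/2, and for each positive integer m define Δ*(m, N) = log(1 + 1/(N + (1+m)ν)) − (1/(1+m)) · Σ_{x=0}^N C(N,x) (1/(1+m))^x (m/(1+m))^{N−x} · (−log(1 − 1/(x + 1 + ν))). Then the limit lim_{m→∞} (1 + m) · Δ*(m, N) exists and is strictly positive; in particular, the estimator p̂ does not dominate p̃ uniformly in m (as m → ∞). -/

import Mathlib

open Finset Filter

theorem no_dominance_large_m (n N : ℕ) (hn : 3 ≤ n) (hN : 1 ≤ N) :
    ∃ L : ℝ,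
      Tendsto
        (fun m : ℕ => (1 + (m : ℝ)) *
          (Real.log (1 + 1 / ((N : ℝ) + (1 + m) * ((1 + n) / 2))) -
            1 / (1 + (m : ℝ)) *
              ∑ x ∈ Finset.range (N+1),
                (N.choose x : ℝ) * (1 / (1 + (m : ℝ))) ^ x *
                  ((m : ℝ) / (1 + (m : ℝ))) ^ (N - x) *
                  (- Real.log (1 - 1 / ((x : ℝ) + 1 + (1 + n) / 2)))))
        atTop (nhds L) ∧ 0 < L := by
  set ν : ℝ := (1 + n) / 2 with hνdef
  have hn3 : (3:ℝ) ≤ (n:ℝ) := by exact_mod_cast hn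
  have hν2 : (2:ℝ) ≤ ν := by rw [hνdef]; linarith
  have hν0 : (0:ℝ) < ν := by linarith
  set c : ℕ → ℝ := fun x => - Real.log (1 - 1 / ((x:ℝ) + 1 + ν)) with hc
  refine ⟨1/ν - c 0, ?_, ?_⟩
  · have hm1 : ∀ m : ℕ, (0:ℝ) < 1 + m := fun m => by positivity
    have h1 : Tendsto (fun m : ℕ => (1 + (m:ℝ))) atTop atTop :=
      tendsto_atTop_add_const_left _ 1 tendsto_natCast_atTop_atTop
    have hu : Tendsto (fun m : ℕ => (N:ℝ) + (1+(m:ℝ))*ν) atTop atTop :=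
      tendsto_atTop_add_const_left _ _ (h1.atTop_mul_const hν0)
    have hupos : ∀ m : ℕ, (0:ℝ) < (N:ℝ) + (1+(m:ℝ))*ν := fun m => by positivity
    -- the log part
    have hlog : Tendsto (fun m : ℕ =>
        ((N:ℝ)+(1+(m:ℝ))*ν) * Real.log (1 + 1/((N:ℝ)+(1+(m:ℝ))*ν))) atTop (nhds 1) :=
      (Real.tendsto_mul_log_one_add_div_atTop 1).comp hu
    have hz : Tendsto (fun m : ℕ => (N:ℝ)/(1+(m:ℝ))) atTop (nhds 0) := by
      have := (tendsto_inv_atTop_zero.comp h1).const_mul (N:ℝ)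
      simpa [div_eq_mul_inv, Function.comp] using this
    have hratio : Tendsto (fun m : ℕ => (1+(m:ℝ))/((N:ℝ)+(1+(m:ℝ))*ν)) atTop (nhds (1/ν)) := by
      have h2 : Tendsto (fun m : ℕ => ((N:ℝ)/(1+(m:ℝ)) + ν)⁻¹) atTop (nhds (1/ν)) := by
        have := ((hz.add tendsto_const_nhds).inv₀ (by simpa using hν0.ne'))
        simpa [one_div] using this
      refine Tendsto.congr (fun m => ?_) h2
      have hm := (hm1 m).ne'
      have e1 : (N:ℝ)/(1+(m:ℝ)) + ν = ((N:ℝ) + (1+(m:ℝ))*ν)/(1+(m:ℝ)) := by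
        field_simp
      rw [e1, inv_div]
    have hA : Tendsto (fun m : ℕ =>
        (1+(m:ℝ)) * Real.log (1 + 1/((N:ℝ)+(1+(m:ℝ))*ν))) atTop (nhds (1/ν)) := by
      have := hratio.mul hlog
      rw [mul_one] at this
      refine Tendsto.congr (fun m => ?_) this
      have hu' := (hupos m).ne'
      rw [← mul_assoc, div_mul_cancel₀ _ hu']
    have hinv : Tendsto (fun m : ℕ => 1/(1+(m:ℝ))) atTop (nhds 0) := by
      simpa [one_div, Function.comp_def] using tendsto_inv_atTop_zero.comp h1
    have hmm : Tendsto (fun m : ℕ => (m:ℝ)/(1+(m:ℝ))) atTop (nhds 1) := by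
      have h2 : Tendsto (fun m : ℕ => 1 - 1/(1+(m:ℝ))) atTop (nhds 1) := by
        simpa using tendsto_const_nhds.sub hinv
      refine Tendsto.congr (fun m => ?_) h2
      have hm := (hm1 m).ne'
      field_simp
      ring
    have hS : Tendsto (fun m : ℕ => ∑ x ∈ Finset.range (N+1),
        (N.choose x:ℝ) * (1/(1+(m:ℝ)))^x * ((m:ℝ)/(1+(m:ℝ)))^(N-x) * c x) atTop
        (nhds (∑ x ∈ Finset.range (N+1),
          (N.choose x:ℝ) * (0:ℝ)^x * (1:ℝ)^(N-x) * c x)) := by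
      apply tendsto_finset_sum
      intro x _
      exact ((tendsto_const_nhds.mul (hinv.pow x)).mul (hmm.pow (N-x))).mul tendsto_const_nhds
    have hval : (∑ x ∈ Finset.range (N+1),
        (N.choose x:ℝ) * (0:ℝ)^x * (1:ℝ)^(N-x) * c x) = c 0 := by
      rw [Finset.sum_eq_single 0]
      · simp
      · intro x _ hx0
        simp [zero_pow hx0]
      · intro h
        exact absurd (Finset.mem_range.mpr (Nat.succ_pos N)) h
    rw [hval] at hS
    have := hA.sub hS
    refine Tendsto.congr (fun m => ?_) this
    have hm := (hm1 m).ne'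
    simp only [hc]
    rw [mul_sub, ← mul_assoc, mul_one_div, div_self hm, one_mul]
  · -- positivity of the limit
    have h1ν : (0:ℝ) < 1 + ν := by linarith
    have hinv : (0:ℝ) < 1/ν := by positivity
    have hc0 : c 0 = Real.log (1 + 1/ν) := by
      have hν' : ν ≠ 0 := hν0.ne'
      have h1ν' : (1:ℝ) + ν ≠ 0 := by positivity
      have e : (1:ℝ) - 1/(((0:ℕ):ℝ) + 1 + ν) = (1 + 1/ν)⁻¹ := by
        push_cast
        rw [zero_add]
        field_simp
        ring
      simp only [hc]
      rw [e, Real.log_inv, neg_neg]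
    have hlt : Real.log (1 + 1/ν) < 1/ν := by
      have := Real.log_lt_sub_one_of_pos (show (0:ℝ) < 1 + 1/ν by positivity)
        (by intro h; linarith)
      linarith
    rw [hc0]
    linarith
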